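/- Let N, R : ℝ² → ℝ³ be twice continuously differentiable with ⟨N, R_x⟩ = 0, ⟨N, R_y⟩ = 0 and det(N, N_x, N_y) ≠ 0 everywhere, and let A, S, B : ℝ² → ℝ be differentiable functions such that R_y = A·(N × N_x) + S·(N × N_y) and R_x = −S·(N × N_x) − B·(N × N_y) everywhere. Then there exists a function F : ℝ² → ℝ such that (A·N_x)_x + (S·N_y)_x + (B·N_y)_y + (S·N_x)_y = F·N at every point; i.e., any co-normal field of a regular twice differentiable locally strongly convex surface satisfies the most general second-order self-adjoint linear partial differential equation in two variables. -/

import Mathlib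

open Matrix

/-- Partial derivative with respect to the first coordinate. -/
noncomputable def pdx (f : ℝ × ℝ → (Fin 3 → ℝ)) (p : ℝ × ℝ) : Fin 3 → ℝ :=
  fderiv ℝ f p (1, 0)

/-- Partial derivative with respect to the second coordinate. -/
noncomputable def pdy (f : ℝ × ℝ → (Fin 3 → ℝ)) (p : ℝ × ℝ) : Fin 3 → ℝ :=
  fderiv ℝ f p (0, 1)

/-- Determinant of the 3×3 matrix with rows `u`, `v`, `w`. -/
noncomputable def det3 (u v w : Fin 3 → ℝ) : ℝ :=
  (Matrix.of ![u, v, w]).det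

/-- The cross product as a continuous linear map in each argument. -/
noncomputable def crossCLM : (Fin 3 → ℝ) →L[ℝ] (Fin 3 → ℝ) →L[ℝ] (Fin 3 → ℝ) :=
  LinearMap.toContinuousLinearMap
    { toFun := fun u => LinearMap.toContinuousLinearMap (crossProduct u),
      map_add' := fun u v => by
        ext w
        simp [LinearMap.map_add₂]
      map_smul' := fun c u => by
        ext w
        simp }

lemma crossCLM_apply (u v : Fin 3 → ℝ) : crossCLM u v = u ⨯₃ v := by
  simp [crossCLM]

/-- Product rule for the cross product. -/
lemma fderiv_cross {f g : ℝ × ℝ → (Fin 3 → ℝ)} {p : ℝ × ℝ}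
    (hf : DifferentiableAt ℝ f p) (hg : DifferentiableAt ℝ g p) (w : ℝ × ℝ) :
    fderiv ℝ (fun q => f q ⨯₃ g q) p w
      = (fderiv ℝ f p w) ⨯₃ g p + f p ⨯₃ (fderiv ℝ g p w) := by
  have hc : DifferentiableAt ℝ (fun q => crossCLM (f q)) p :=
    (crossCLM.differentiableAt).comp p hf
  have heq : (fun q => f q ⨯₃ g q) = fun q => (crossCLM (f q)) (g q) := by
    funext q; rw [crossCLM_apply]
  rw [heq, fderiv_clm_apply hc hg]
  have hcf : fderiv ℝ (fun q => crossCLM (f q)) p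
      = crossCLM.comp (fderiv ℝ f p) := by
    have := fderiv_comp (𝕜 := ℝ) p (crossCLM.differentiableAt (x := f p)) hf
    simp only [ContinuousLinearMap.fderiv] at this
    exact this
  rw [hcf]
  simp only [ContinuousLinearMap.add_apply, ContinuousLinearMap.coe_comp',
    Function.comp_apply, ContinuousLinearMap.flip_apply, ContinuousLinearMap.comp_apply,
    crossCLM_apply]
  abel

lemma dot_self_ne_zero {u : Fin 3 → ℝ} (hu : u ≠ 0) : u ⬝ᵥ u ≠ 0 := by
  intro h
  apply hu
  have hd : u 0 * u 0 + u 1 * u 1 + u 2 * u 2 = 0 := by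
    simpa [dotProduct, Fin.sum_univ_three] using h
  have h0 : u 0 = 0 := by nlinarith [sq_nonneg (u 0), sq_nonneg (u 1), sq_nonneg (u 2)]
  have h1 : u 1 = 0 := by nlinarith [sq_nonneg (u 0), sq_nonneg (u 1), sq_nonneg (u 2)]
  have h2 : u 2 = 0 := by nlinarith [sq_nonneg (u 0), sq_nonneg (u 1), sq_nonneg (u 2)]
  funext i
  fin_cases i
  · exact h0
  · exact h1
  · exact h2

/-- If `u ⨯₃ v = 0` and `u ≠ 0`, then `v` is a multiple of `u`. -/
lemma cross_eq_zero_parallel {u v : Fin 3 → ℝ} (hu : u ≠ 0) (h : u ⨯₃ v = 0) :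
    v = ((u ⬝ᵥ v) / (u ⬝ᵥ u)) • u := by
  have huu : u ⬝ᵥ u ≠ 0 := dot_self_ne_zero hu
  have h0 : u 1 * v 2 - u 2 * v 1 = 0 := by
    have := congrFun h 0; simpa [cross_apply] using this
  have h1 : u 2 * v 0 - u 0 * v 2 = 0 := by
    have := congrFun h 1; simpa [cross_apply] using this
  have h2 : u 0 * v 1 - u 1 * v 0 = 0 := by
    have := congrFun h 2; simpa [cross_apply] using this
  have hd : u ⬝ᵥ u = u 0 * u 0 + u 1 * u 1 + u 2 * u 2 := by
    simp [dotProduct, Fin.sum_univ_three]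
  have hdv : u ⬝ᵥ v = u 0 * v 0 + u 1 * v 1 + u 2 * v 2 := by
    simp [dotProduct, Fin.sum_univ_three]
  have k0 : v 0 * (u ⬝ᵥ u) = (u ⬝ᵥ v) * u 0 := by
    rw [hd, hdv]; linear_combination (- (u 1)) * h2 + u 2 * h1
  have k1 : v 1 * (u ⬝ᵥ u) = (u ⬝ᵥ v) * u 1 := by
    rw [hd, hdv]; linear_combination u 0 * h2 - u 2 * h0
  have k2 : v 2 * (u ⬝ᵥ u) = (u ⬝ᵥ v) * u 2 := by
    rw [hd, hdv]; linear_combination (- (u 0)) * h1 + u 1 * h0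
  funext i
  fin_cases i
  · show v 0 = (u ⬝ᵥ v) / (u ⬝ᵥ u) * u 0
    rw [div_mul_eq_mul_div, eq_div_iff huu]; linarith [k0]
  · show v 1 = (u ⬝ᵥ v) / (u ⬝ᵥ u) * u 1
    rw [div_mul_eq_mul_div, eq_div_iff huu]; linarith [k1]
  · show v 2 = (u ⬝ᵥ v) / (u ⬝ᵥ u) * u 2
    rw [div_mul_eq_mul_div, eq_div_iff huu]; linarith [k2]

/-- A co-normal field of a regular, twice differentiable, locally strongly convex
surface satisfies the most general second-order self-adjoint linear PDE in two
variables: `(A N_x)_x + (S N_y)_x + (B N_y)_y + (S N_x)_y = F N`. -/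
theorem conormal_satisfies_selfadjoint_pde
    (N R : ℝ × ℝ → (Fin 3 → ℝ)) (A S B : ℝ × ℝ → ℝ)
    (hN : ContDiff ℝ 2 N) (hR : ContDiff ℝ 2 R)
    (hA : Differentiable ℝ A) (hS : Differentiable ℝ S) (hB : Differentiable ℝ B)
    (hx : ∀ p, N p ⬝ᵥ pdx R p = 0) (hy : ∀ p, N p ⬝ᵥ pdy R p = 0)
    (hreg : ∀ p, det3 (N p) (pdx N p) (pdy N p) ≠ 0)
    (hdec : ∀ p, pdy R p = A p • (N p ⨯₃ pdx N p) + S p • (N p ⨯₃ pdy N p) ∧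
                 pdx R p = -(S p • (N p ⨯₃ pdx N p)) - B p • (N p ⨯₃ pdy N p)) :
    ∃ F : ℝ × ℝ → ℝ, ∀ p,
      pdx (fun q => A q • pdx N q) p + pdx (fun q => S q • pdy N q) p
        + pdy (fun q => B q • pdy N q) p + pdy (fun q => S q • pdx N q) p
      = F p • N p := by
  -- notation
  set L : ℝ × ℝ → (Fin 3 → ℝ) := fun q => A q • pdx N q + S q • pdy N q with hLdef
  set M : ℝ × ℝ → (Fin 3 → ℝ) := fun q => B q • pdy N q + S q • pdx N q with hMdef
  -- differentiability of pdx N, pdy N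
  have hN' : ContDiff ℝ 1 (fderiv ℝ N) := hN.fderiv_right (by norm_num)
  have hR' : ContDiff ℝ 1 (fderiv ℝ R) := hR.fderiv_right (by norm_num)
  have hNx : Differentiable ℝ (pdx N) :=
    (hN'.clm_apply contDiff_const).differentiable one_ne_zero
  have hNy : Differentiable ℝ (pdy N) :=
    (hN'.clm_apply contDiff_const).differentiable one_ne_zero
  have hL : Differentiable ℝ L := (hA.smul hNx).add (hS.smul hNy)
  have hM : Differentiable ℝ M := (hB.smul hNy).add (hS.smul hNx)
  have hNd : Differentiable ℝ N := hN.differentiable (by norm_num)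
  -- decomposition as cross products
  have hRy : (fun q => pdy R q) = fun q => N q ⨯₃ L q := by
    funext q
    rw [(hdec q).1]
    simp [hLdef, map_add, _root_.map_smul]
  have hRx : (fun q => pdx R q) = fun q => -(N q ⨯₃ M q) := by
    funext q
    rw [(hdec q).2]
    simp [hMdef, map_add, _root_.map_smul]
    abel
  -- symmetry of second derivatives
  have hsymm : ∀ p, pdx (fun q => pdy R q) p = pdy (fun q => pdx R q) p := by
    intro p
    have hsym : IsSymmSndFDerivAt ℝ R p :=
      (hR.contDiffAt).isSymmSndFDerivAt (by norm_num)
    have key : ∀ v w : ℝ × ℝ, fderiv ℝ (fun q => fderiv ℝ R q w) p v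
        = (fderiv ℝ (fderiv ℝ R) p v) w := by
      intro v w
      have hdR : DifferentiableAt ℝ (fderiv ℝ R) p :=
        (hR'.differentiable one_ne_zero) p
      rw [fderiv_clm_apply hdR (differentiableAt_const w)]
      simp
    show fderiv ℝ (fun q => fderiv ℝ R q (0,1)) p (1,0)
        = fderiv ℝ (fun q => fderiv ℝ R q (1,0)) p (0,1)
    rw [key, key, hsym]
  -- the explicit scalar function
  refine ⟨fun p => (N p ⬝ᵥ (fderiv ℝ L p (1,0) + fderiv ℝ M p (0,1))) / (N p ⬝ᵥ N p),
    fun p => ?_⟩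
  have hNz : N p ≠ 0 := by
    intro h
    apply hreg p
    show det3 (N p) (pdx N p) (pdy N p) = 0
    unfold det3
    apply Matrix.det_eq_zero_of_row_eq_zero 0
    intro j
    simp [h]
  -- rewrite the four terms as two derivatives
  have e1 : pdx (fun q => A q • pdx N q) p + pdx (fun q => S q • pdy N q) p
      = fderiv ℝ L p (1,0) := by
    have h2 : fderiv ℝ L p = fderiv ℝ (fun q => A q • pdx N q) p
        + fderiv ℝ (fun q => S q • pdy N q) p :=
      fderiv_add ((hA p).smul (hNx p)) ((hS p).smul (hNy p))
    show fderiv ℝ (fun q => A q • pdx N q) p (1,0)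
        + fderiv ℝ (fun q => S q • pdy N q) p (1,0) = fderiv ℝ L p (1,0)
    rw [h2]; rfl
  have e2 : pdy (fun q => B q • pdy N q) p + pdy (fun q => S q • pdx N q) p
      = fderiv ℝ M p (0,1) := by
    have h2 : fderiv ℝ M p = fderiv ℝ (fun q => B q • pdy N q) p
        + fderiv ℝ (fun q => S q • pdx N q) p :=
      fderiv_add ((hB p).smul (hNy p)) ((hS p).smul (hNx p))
    show fderiv ℝ (fun q => B q • pdy N q) p (0,1)
        + fderiv ℝ (fun q => S q • pdx N q) p (0,1) = fderiv ℝ M p (0,1)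
    rw [h2]; rfl
  -- mixed partials via the cross-product decomposition
  have c1 : pdx (fun q => pdy R q) p
      = fderiv ℝ N p (1,0) ⨯₃ L p + N p ⨯₃ fderiv ℝ L p (1,0) := by
    show fderiv ℝ (fun q => pdy R q) p (1,0) = _
    rw [hRy]
    exact fderiv_cross (hNd p) (hL p) (1,0)
  have c2 : pdy (fun q => pdx R q) p
      = -(fderiv ℝ N p (0,1) ⨯₃ M p + N p ⨯₃ fderiv ℝ M p (0,1)) := by
    show fderiv ℝ (fun q => pdx R q) p (0,1) = _
    rw [hRx]
    have hneg : fderiv ℝ (fun q => -(N q ⨯₃ M q)) p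
        = -(fderiv ℝ (fun q => N q ⨯₃ M q) p) := fderiv_neg
    rw [hneg]
    rw [ContinuousLinearMap.neg_apply]
    rw [fderiv_cross (hNd p) (hM p) (0,1)]
  -- the tangential parts cancel
  have hanti : pdy N p ⨯₃ pdx N p = -(pdx N p ⨯₃ pdy N p) :=
    (cross_anticomm (pdx N p) (pdy N p)).symm
  have e5 : fderiv ℝ N p (1,0) ⨯₃ L p + fderiv ℝ N p (0,1) ⨯₃ M p = 0 := by
    show pdx N p ⨯₃ L p + pdy N p ⨯₃ M p = 0
    simp only [hLdef, hMdef]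
    rw [map_add, _root_.map_smul, _root_.map_smul, map_add, _root_.map_smul, _root_.map_smul,
      cross_self, cross_self]
    rw [hanti, smul_neg]
    simp only [smul_zero, zero_add]
    abel
  have h1 := hsymm p
  rw [c1, c2] at h1
  have hcross : N p ⨯₃ (fderiv ℝ L p (1,0) + fderiv ℝ M p (0,1)) = 0 := by
    rw [map_add]
    have h7 : N p ⨯₃ fderiv ℝ L p (1,0) + N p ⨯₃ fderiv ℝ M p (0,1)
        = -(fderiv ℝ N p (1,0) ⨯₃ L p + fderiv ℝ N p (0,1) ⨯₃ M p) := by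
      calc N p ⨯₃ fderiv ℝ L p (1,0) + N p ⨯₃ fderiv ℝ M p (0,1)
          = (fderiv ℝ N p (1,0) ⨯₃ L p + N p ⨯₃ fderiv ℝ L p (1,0))
            + (fderiv ℝ N p (0,1) ⨯₃ M p + N p ⨯₃ fderiv ℝ M p (0,1))
            - (fderiv ℝ N p (1,0) ⨯₃ L p + fderiv ℝ N p (0,1) ⨯₃ M p) := by abel
        _ = -(fderiv ℝ N p (0,1) ⨯₃ M p + N p ⨯₃ fderiv ℝ M p (0,1))
            + (fderiv ℝ N p (0,1) ⨯₃ M p + N p ⨯₃ fderiv ℝ M p (0,1))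
            - (fderiv ℝ N p (1,0) ⨯₃ L p + fderiv ℝ N p (0,1) ⨯₃ M p) := by rw [h1]
        _ = -(fderiv ℝ N p (1,0) ⨯₃ L p + fderiv ℝ N p (0,1) ⨯₃ M p) := by abel
    rw [h7, e5, neg_zero]
  have hfinal := cross_eq_zero_parallel hNz hcross
  rw [add_assoc, e1, e2]
  exact hfinal
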